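/- Let (G,·,e,⊙) be a left group-e-semigroup. Then the set e⊙G = {e⊙x : x ∈ G} is a subgroup of the semigroup (G,⊙); concretely: (e⊙x)⊙(e⊙y) = e⊙(x·y) for all x,y ∈ G (so e⊙G is closed under ⊙), (e⊙e)⊙(e⊙x) = e⊙x = (e⊙x)⊙(e⊙e) for all x ∈ G (e⊙e is a two-sided identity on e⊙G), and (e⊙x)⊙(e⊙x⁻¹) = e⊙e = (e⊙x⁻¹)⊙(e⊙x) for all x ∈ G, where x⁻¹ denotes the inverse of x in the group (G,·). -/
import Mathlib

/-- In a left group-`e`-semigroup `(G, ·, e, ⊙)` (here the group identity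
`e` is `1`), the set `e ⊙ G` is a subgroup of the semigroup `(G, ⊙)`:
it is closed under `⊙` (concretely `(e⊙x) ⊙ (e⊙y) = e⊙(x·y)`), `e⊙e` is a two-sided
identity on it, and `e⊙x⁻¹` is a two-sided inverse of `e⊙x` with respect to `e⊙e`. -/
theorem stmt_0 {G : Type*} [Group G] (op : G → G → G)
    (hassoc : ∀ x y z : G, op (op x y) z = op x (op y z))
    (hjoin : ∀ x y : G, op 1 (x * y) = op 1 (op x y)) :
    (∀ x y : G, op (op 1 x) (op 1 y) = op 1 (x * y)) ∧
    (∀ x : G, op (op 1 1) (op 1 x) = op 1 x ∧ op (op 1 x) (op 1 1) = op 1 x) ∧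
    (∀ x : G, op (op 1 x) (op 1 x⁻¹) = op 1 1 ∧ op (op 1 x⁻¹) (op 1 x) = op 1 1) := by
  have key : ∀ a b : G, op (op 1 a) b = op 1 (a * b) := fun a b => by
    rw [hassoc, ← hjoin]
  have closure : ∀ x y : G, op (op 1 x) (op 1 y) = op 1 (x * y) := fun x y => by
    rw [← hassoc, key x 1, mul_one, key]
  refine ⟨closure, fun x => ?_, fun x => ?_⟩
  · rw [closure, closure, one_mul, mul_one]; exact ⟨rfl, rfl⟩
  · rw [closure, closure, mul_inv_cancel, inv_mul_cancel]; exact ⟨rfl, rfl⟩
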